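/- Let A be an m×m real symmetric positive-definite matrix and p < m. Define the Oja vector field F(X) = AX − X Xᵀ A X for X ∈ ℝ^{m×p}. If X has full column rank, then F(X) = 0 if and only if XᵀX = I_p and the column space of X is an invariant subspace of A (i.e., A X = X (XᵀAX)). -/

import Mathlib

open Matrix

lemma mulVec_inj_of_rank {m p : ℕ} (X : Matrix (Fin m) (Fin p) ℝ)
    (hX : X.rank = p) : Function.Injective X.mulVec := by
  have h := LinearMap.finrank_range_add_finrank_ker X.mulVecLin
  rw [Matrix.rank] at hX
  rw [hX, Module.finrank_fin_fun] at h
  have hker : Module.finrank ℝ (LinearMap.ker X.mulVecLin) = 0 := by omega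
  have : LinearMap.ker X.mulVecLin = ⊥ := Submodule.finrank_eq_zero.mp hker
  have hinj := LinearMap.ker_eq_bot.mp this
  exact hinj

lemma XtAX_posDef {m p : ℕ} (A : Matrix (Fin m) (Fin m) ℝ) (hA : A.IsSymm)
    (hApd : A.PosDef) (X : Matrix (Fin m) (Fin p) ℝ) (hX : X.rank = p) :
    (Xᵀ * A * X).PosDef := by
  rw [posDef_iff_dotProduct_mulVec]
  constructor
  · have : (Xᵀ * A * X)ᵀ = Xᵀ * A * X := by
      rw [transpose_mul, transpose_mul, transpose_transpose, hA.eq, Matrix.mul_assoc]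
    rw [Matrix.IsHermitian, conjTranspose_eq_transpose_of_trivial]; exact this
  · intro x hx
    have hXx : X.mulVec x ≠ 0 := by
      intro h
      exact hx (mulVec_inj_of_rank X hX (by simpa using h))
    have hpos := hApd.dotProduct_mulVec_pos hXx
    simp only [star_trivial] at hpos ⊢
    calc (0:ℝ) < X.mulVec x ⬝ᵥ A.mulVec (X.mulVec x) := by simpa using hpos
      _ = x ⬝ᵥ (Xᵀ * A * X).mulVec x := by
          rw [← Matrix.mulVec_mulVec, ← Matrix.mulVec_mulVec,
            Matrix.dotProduct_mulVec x Xᵀ, Matrix.vecMul_transpose]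

/-- Oja vector field zero characterization: for `A` symmetric positive-definite,
`p < m`, and `X` of full column rank, `AX - XXᵀAX = 0` iff `X` is orthonormal and
the column space of `X` is invariant under `A`. -/
theorem oja_zero_iff (m p : ℕ) (hp : 0 < p) (hpm : p < m)
    (A : Matrix (Fin m) (Fin m) ℝ) (hA : A.IsSymm) (hApd : A.PosDef)
    (X : Matrix (Fin m) (Fin p) ℝ) (hX : X.rank = p) :
    A * X - X * Xᵀ * A * X = 0 ↔
      (Xᵀ * X = 1 ∧ ∃ M : Matrix (Fin p) (Fin p) ℝ, A * X = X * M) := by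
  have hB : (Xᵀ * A * X).PosDef := XtAX_posDef A hA hApd X hX
  have hBu : IsUnit (Xᵀ * A * X) := hB.isUnit
  constructor
  · intro h
    have heq : A * X = X * (Xᵀ * A * X) := by
      have := sub_eq_zero.mp h
      rw [this]; simp [Matrix.mul_assoc]
    have h2 : Xᵀ * A * X = (Xᵀ * X) * (Xᵀ * A * X) := by
      calc Xᵀ * A * X = Xᵀ * (A * X) := by rw [Matrix.mul_assoc]
        _ = Xᵀ * (X * (Xᵀ * A * X)) := by rw [heq]
        _ = (Xᵀ * X) * (Xᵀ * A * X) := by simp [Matrix.mul_assoc]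
    have hXtX : Xᵀ * X = 1 := by
      have h2' : (Xᵀ * X) * (Xᵀ * A * X) = 1 * (Xᵀ * A * X) := by rw [one_mul]; exact h2.symm
      exact hBu.mul_right_cancel h2'
    exact ⟨hXtX, ⟨Xᵀ * A * X, heq⟩⟩
  · rintro ⟨hXtX, M, hM⟩
    have : Xᵀ * A * X = M := by
      calc Xᵀ * A * X = Xᵀ * (A * X) := by rw [Matrix.mul_assoc]
        _ = Xᵀ * (X * M) := by rw [hM]
        _ = (Xᵀ * X) * M := by rw [Matrix.mul_assoc]
        _ = M := by rw [hXtX, one_mul]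
    rw [sub_eq_zero, Matrix.mul_assoc, Matrix.mul_assoc, ← Matrix.mul_assoc Xᵀ, this, hM]
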